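/- Let n ≥ 2, let A ∈ ℝ^{n×n} be sum-symmetric with row sums r_j = Σ_i A_{ji} (equal to the column sums), let D be the diagonal matrix with D_{jj} = r_j, and set M := D − A. Then for every real s ≥ cot(π/n) and every z ∈ ℂⁿ, one has z† ( s(M + Mᵀ) + i(M − Mᵀ) ) z ≥ 0; in particular the asymmetry index of D − A is at most cot(π/n). -/

import Mathlib

open Matrix Complex ComplexOrder

/-- The Hermitian matrix `K_s(M) = s (M + Mᵀ) + i (M − Mᵀ)` associated with a
real square matrix `M` and a real parameter `s`. -/
noncomputable def Kmat {ι : Type*} [Fintype ι] (M : Matrix ι ι ℝ) (s : ℝ) :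
    Matrix ι ι ℂ :=
  (s : ℂ) • ((M + Mᵀ).map Complex.ofReal) + Complex.I • ((M - Mᵀ).map Complex.ofReal)

open Finset

noncomputable def gterm (s : ℝ) (a b : ℂ) : ℝ :=
  s * Complex.normSq (a - b) + 2 * ((starRingEnd ℂ a) * b).im

lemma root_sum (ℓ : ℕ) (hl : 1 ≤ ℓ) (m : ℤ) :
    ∑ k ∈ Finset.range ℓ, (Complex.exp (2*Real.pi*I/ℓ)) ^ (m * k) =
      if (ℓ:ℤ) ∣ m then (ℓ:ℂ) else 0 := by
  have prim := Complex.isPrimitiveRoot_exp ℓ (by omega)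
  set ω := Complex.exp (2*Real.pi*I/ℓ) with hω
  have hω0 : ω ≠ 0 := Complex.exp_ne_zero _
  have hiff : ∀ i : ℤ, ω ^ i = 1 ↔ (ℓ:ℤ) ∣ i := fun i => prim.zpow_eq_one_iff_dvd i
  by_cases hd : (ℓ:ℤ) ∣ m
  · simp only [hd, if_true]
    have : ω ^ m = 1 := (hiff m).2 hd
    calc ∑ k ∈ Finset.range ℓ, ω ^ (m * k) = ∑ k ∈ Finset.range ℓ, (ω ^ m) ^ (k:ℤ) := by
          refine Finset.sum_congr rfl fun k _ => ?_; rw [← _root_.zpow_mul]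
      _ = (ℓ:ℂ) := by simp [this]
  · simp only [hd, if_false]
    have hne : ω ^ m ≠ 1 := fun h => hd ((hiff m).1 h)
    have hpow : (ω ^ m) ^ ℓ = 1 := by
      rw [← _root_.zpow_natCast, ← _root_.zpow_mul, mul_comm, _root_.zpow_mul, _root_.zpow_natCast]
      rw [prim.pow_eq_one]; simp
    calc ∑ k ∈ Finset.range ℓ, ω ^ (m * k)
        = ∑ k ∈ Finset.range ℓ, (ω ^ m) ^ k := by
          refine Finset.sum_congr rfl fun k _ => ?_
          rw [← _root_.zpow_natCast ((ω^m)) k, ← _root_.zpow_mul]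
      _ = ((ω ^ m) ^ ℓ - 1)/(ω ^ m - 1) := geom_sum_eq hne ℓ
      _ = 0 := by rw [hpow]; simp

lemma lam_nonneg (n ℓ k : ℕ) (hn : 2 ≤ n) (hl : 1 ≤ ℓ) (hln : ℓ ≤ n) (hk : k < ℓ)
    (s : ℝ) (hs : Real.cot (Real.pi / n) ≤ s) :
    0 ≤ s * (1 - Real.cos (2*Real.pi*k/ℓ)) + Real.sin (2*Real.pi*k/ℓ) := by
  have hπ := Real.pi_pos
  have hn0 : (0:ℝ) < n := by positivity
  have hl0 : (0:ℝ) < ℓ := by exact_mod_cast hl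
  set φ : ℝ := Real.pi * k / ℓ with hφ
  have hθ : 2*Real.pi*k/ℓ = 2*φ := by rw [hφ]; ring
  rw [hθ, Real.cos_two_mul', Real.sin_two_mul]
  have h1 : s * (1 - (Real.cos φ ^ 2 - Real.sin φ ^ 2)) + 2 * Real.sin φ * Real.cos φ
      = 2 * Real.sin φ * (s * Real.sin φ + Real.cos φ) := by
    linear_combination (-s) * Real.sin_sq_add_cos_sq φ
  rw [h1]
  have hφ0 : 0 ≤ φ := by positivity
  have hφlt : φ ≤ Real.pi - Real.pi/ℓ := by
    rw [hφ]
    have : (k:ℝ) ≤ ℓ - 1 := by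
      have : (k:ℝ) + 1 ≤ ℓ := by exact_mod_cast hk
      linarith
    rw [div_le_iff₀ hl0]
    calc Real.pi * k ≤ Real.pi * (ℓ - 1) := by nlinarith
      _ = (Real.pi - Real.pi/ℓ) * ℓ := by field_simp
  have hsinφ : 0 ≤ Real.sin φ := by
    apply Real.sin_nonneg_of_nonneg_of_le_pi hφ0
    have : 0 < Real.pi/ℓ := by positivity
    linarith
  have hsinn : 0 < Real.sin (Real.pi/n) := by
    apply Real.sin_pos_of_pos_of_lt_pi (by positivity)
    rw [div_lt_iff₀ hn0]
    have h2n : (2:ℝ) ≤ n := by exact_mod_cast hn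
    nlinarith
  have key : 0 ≤ Real.cot (Real.pi/n) * Real.sin φ + Real.cos φ := by
    have h2 : Real.cot (Real.pi/n) * Real.sin φ + Real.cos φ
        = Real.sin (φ + Real.pi/n) / Real.sin (Real.pi/n) := by
      rw [Real.sin_add, Real.cot_eq_cos_div_sin]
      field_simp
    rw [h2]
    apply div_nonneg _ hsinn.le
    apply Real.sin_nonneg_of_nonneg_of_le_pi (by positivity)
    have : Real.pi/n ≤ Real.pi/ℓ := by
      apply div_le_div_of_nonneg_left hπ.le hl0
      exact_mod_cast hln
    linarith
  nlinarith [mul_le_mul_of_nonneg_left hs hsinφ]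

lemma dft_aux (ℓ : ℕ) (hl : 1 ≤ ℓ) (w : ℕ → ℂ) (t : ℕ) :
    ∑ k ∈ range ℓ, (Complex.exp (2*Real.pi*I/ℓ)) ^ ((t:ℤ)*k) *
      ((starRingEnd ℂ (∑ j ∈ range ℓ, (Complex.exp (2*Real.pi*I/ℓ)) ^ (-(j:ℤ)*k) * w j)) *
        (∑ j ∈ range ℓ, (Complex.exp (2*Real.pi*I/ℓ)) ^ (-(j:ℤ)*k) * w j)) =
    (ℓ:ℂ) * ∑ a ∈ range ℓ, starRingEnd ℂ (w a) * w ((a + t) % ℓ) := by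
  set ω := Complex.exp (2*Real.pi*I/ℓ) with hω
  have hω0 : ω ≠ 0 := Complex.exp_ne_zero _
  have hconj : ∀ m : ℤ, starRingEnd ℂ (ω ^ m) = ω ^ (-m) := by
    intro m
    have hc : starRingEnd ℂ (2*Real.pi*I/(ℓ:ℂ)) = -(2*Real.pi*I/(ℓ:ℂ)) := by
      have he : ((2:ℂ)*Real.pi*I/(ℓ:ℂ)) = ((2*Real.pi/ℓ : ℝ):ℂ) * I := by push_cast; ring
      rw [he, _root_.map_mul, Complex.conj_ofReal, Complex.conj_I]; ring
    rw [_root_.map_zpow₀, ← Complex.exp_conj, hω, hc, Complex.exp_neg, ← hω, _root_.inv_zpow, ← _root_.zpow_neg]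
  have hconj_sum : ∀ k : ℕ,
      starRingEnd ℂ (∑ j ∈ range ℓ, ω ^ (-(j:ℤ)*k) * w j)
        = ∑ a ∈ range ℓ, ω ^ ((a:ℤ)*k) * starRingEnd ℂ (w a) := by
    intro k
    rw [_root_.map_sum]
    refine Finset.sum_congr rfl fun a _ => ?_
    rw [_root_.map_mul, hconj]
    congr 2
    ring
  calc ∑ k ∈ range ℓ, ω ^ ((t:ℤ)*k) *
        ((starRingEnd ℂ (∑ j ∈ range ℓ, ω ^ (-(j:ℤ)*k) * w j)) *
          (∑ j ∈ range ℓ, ω ^ (-(j:ℤ)*k) * w j))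
      = ∑ k ∈ range ℓ, ∑ a ∈ range ℓ, ∑ b ∈ range ℓ,
          ω ^ (((t:ℤ) + a - b)*k) * (starRingEnd ℂ (w a) * w b) := by
        refine Finset.sum_congr rfl fun k _ => ?_
        rw [hconj_sum, Finset.sum_mul_sum, Finset.mul_sum]
        refine Finset.sum_congr rfl fun a _ => ?_
        rw [Finset.mul_sum]
        refine Finset.sum_congr rfl fun b _ => ?_
        rw [show ((t:ℤ) + a - b)*k = (t:ℤ)*k + ((a:ℤ)*k + (-(b:ℤ)*k)) by ring,
          _root_.zpow_add₀ hω0, _root_.zpow_add₀ hω0]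
        ring
    _ = ∑ a ∈ range ℓ, ∑ b ∈ range ℓ,
          (if (ℓ:ℤ) ∣ ((t:ℤ) + a - b) then (ℓ:ℂ) else 0) * (starRingEnd ℂ (w a) * w b) := by
        rw [Finset.sum_comm]
        refine Finset.sum_congr rfl fun a _ => ?_
        rw [Finset.sum_comm]
        refine Finset.sum_congr rfl fun b _ => ?_
        rw [← Finset.sum_mul, root_sum ℓ hl]
    _ = (ℓ:ℂ) * ∑ a ∈ range ℓ, starRingEnd ℂ (w a) * w ((a + t) % ℓ) := by
        rw [Finset.mul_sum]
        refine Finset.sum_congr rfl fun a ha => ?_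
        have hmem : (a + t) % ℓ ∈ range ℓ := by
          simp [Nat.mod_lt _ (by omega : 0 < ℓ)]
        have h' : (ℓ:ℤ) * (((a+t)/ℓ : ℕ):ℤ) + (((a+t)%ℓ : ℕ):ℤ) = (a:ℤ) + t := by
          exact_mod_cast Nat.div_add_mod (a + t) ℓ
        have h2 : (a + t) % ℓ < ℓ := Nat.mod_lt _ (by omega)
        rw [Finset.sum_eq_single_of_mem ((a + t) % ℓ) hmem]
        · rw [if_pos ⟨(((a+t)/ℓ : ℕ):ℤ), by linarith⟩]
        · intro b hb hne
          have hb' : b < ℓ := Finset.mem_range.1 hb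
          rw [if_neg, zero_mul]
          rintro ⟨c, hc⟩
          apply hne
          have hdvd : (ℓ:ℤ) ∣ ((((a+t)%ℓ : ℕ):ℤ) - b) :=
            ⟨c - (((a+t)/ℓ : ℕ):ℤ), by linear_combination h' + hc⟩
          have habs : |(((a+t)%ℓ : ℕ):ℤ) - b| < (ℓ:ℤ) := by
            rw [abs_lt]; constructor <;> [omega; omega]
          have := Int.eq_zero_of_abs_lt_dvd hdvd habs
          omega

lemma cycle_nonneg (n ℓ : ℕ) (hn : 2 ≤ n) (hl : 1 ≤ ℓ) (hln : ℓ ≤ n)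
    (s : ℝ) (hs : Real.cot (Real.pi / n) ≤ s) (w : ℕ → ℂ) (hw : w ℓ = w 0) :
    0 ≤ ∑ j ∈ range ℓ, gterm s (w j) (w (j+1)) := by
  simp only [gterm]
  set ω := Complex.exp (2*Real.pi*I/ℓ) with hω
  set wh : ℕ → ℂ := fun k => ∑ j ∈ range ℓ, ω ^ (-(j:ℤ)*k) * w j with hwh
  -- Parseval (t = 0)
  have h0 : ∑ k ∈ range ℓ, (starRingEnd ℂ (wh k) * wh k)
      = (ℓ:ℂ) * ∑ a ∈ range ℓ, starRingEnd ℂ (w a) * w a := by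
    have h := dft_aux ℓ hl w 0
    simp only [Nat.cast_zero, zero_mul, _root_.zpow_zero, one_mul, Nat.add_zero] at h
    have hR : ∑ x ∈ range ℓ, starRingEnd ℂ (w x) * w (x % ℓ)
        = ∑ x ∈ range ℓ, starRingEnd ℂ (w x) * w x :=
      Finset.sum_congr rfl fun a ha => by rw [Nat.mod_eq_of_lt (Finset.mem_range.1 ha)]
    rw [hR] at h
    exact h
  -- shift identity (t = 1)
  have h1 : ∑ k ∈ range ℓ, ω ^ (k:ℤ) * (starRingEnd ℂ (wh k) * wh k)
      = (ℓ:ℂ) * ∑ a ∈ range ℓ, starRingEnd ℂ (w a) * w (a+1) := by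
    have h := dft_aux ℓ hl w 1
    have hmod : ∀ a ∈ range ℓ, starRingEnd ℂ (w a) * w ((a+1) % ℓ)
        = starRingEnd ℂ (w a) * w (a+1) := by
      intro a ha
      have ha' : a < ℓ := Finset.mem_range.1 ha
      rcases Nat.lt_or_ge (a+1) ℓ with h'|h'
      · rw [Nat.mod_eq_of_lt h']
      · have : a + 1 = ℓ := by omega
        rw [this, Nat.mod_self, ← hw]
    rw [Finset.sum_congr rfl hmod] at h
    simp only [Nat.cast_one, one_mul] at h
    exact h
  -- real reformulations
  have hl0 : (0:ℝ) < ℓ := by exact_mod_cast hl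
  set N : ℕ → ℝ := fun k => Complex.normSq (wh k) with hN
  set P : ℝ := ∑ j ∈ range ℓ, Complex.normSq (w j) with hPdef
  set Sc : ℂ := ∑ j ∈ range ℓ, starRingEnd ℂ (w j) * w (j+1) with hScdef
  have hconj_mul : ∀ z : ℂ, starRingEnd ℂ z * z = (Complex.normSq z : ℂ) := by
    intro z; rw [mul_comm, Complex.mul_conj]
  have hP : ∑ k ∈ range ℓ, N k = ℓ * P := by
    have h0' : ∑ k ∈ range ℓ, ((N k : ℝ) : ℂ)
        = (ℓ:ℂ) * ∑ a ∈ range ℓ, ((Complex.normSq (w a) : ℝ) : ℂ) := by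
      calc ∑ k ∈ range ℓ, ((N k : ℝ) : ℂ)
          = ∑ k ∈ range ℓ, (starRingEnd ℂ (wh k) * wh k) :=
            Finset.sum_congr rfl fun k _ => (hconj_mul _).symm
        _ = (ℓ:ℂ) * ∑ a ∈ range ℓ, starRingEnd ℂ (w a) * w a := h0
        _ = (ℓ:ℂ) * ∑ a ∈ range ℓ, ((Complex.normSq (w a) : ℝ) : ℂ) := by
            rw [Finset.sum_congr rfl fun a _ => hconj_mul (w a)]
    exact_mod_cast h0'
  have h1' : ∑ k ∈ range ℓ, ω ^ (k:ℤ) * ((N k : ℝ) : ℂ) = (ℓ:ℂ) * Sc := by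
    calc ∑ k ∈ range ℓ, ω ^ (k:ℤ) * ((N k : ℝ) : ℂ)
        = ∑ k ∈ range ℓ, ω ^ (k:ℤ) * (starRingEnd ℂ (wh k) * wh k) :=
          Finset.sum_congr rfl fun k _ => by rw [hconj_mul]
      _ = (ℓ:ℂ) * Sc := h1
  have hRe : ∑ k ∈ range ℓ, (ω ^ (k:ℤ)).re * N k = ℓ * Sc.re := by
    have := congrArg Complex.re h1'
    simpa [Complex.re_sum, Complex.mul_re] using this
  have hIm : ∑ k ∈ range ℓ, (ω ^ (k:ℤ)).im * N k = ℓ * Sc.im := by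
    have := congrArg Complex.im h1'
    simpa [Complex.im_sum, Complex.mul_im] using this
  -- express target via P, Sc
  have hshift : ∑ j ∈ range ℓ, Complex.normSq (w (j+1)) = P := by
    have h2 := Finset.sum_range_succ (fun j => Complex.normSq (w j)) ℓ
    have h3 := Finset.sum_range_succ' (fun j => Complex.normSq (w j)) ℓ
    rw [hPdef]
    have : Complex.normSq (w ℓ) = Complex.normSq (w 0) := by rw [hw]
    rw [h3] at h2
    linarith
  have hT : ∑ j ∈ range ℓ, (s * Complex.normSq (w j - w (j+1))
        + 2 * ((starRingEnd ℂ (w j)) * w (j+1)).im)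
      = 2*s*P - 2*s*Sc.re + 2*Sc.im := by
    have hterm : ∀ j, s * Complex.normSq (w j - w (j+1))
          + 2 * ((starRingEnd ℂ (w j)) * w (j+1)).im
        = s * Complex.normSq (w j) + s * Complex.normSq (w (j+1))
          - 2*s*((starRingEnd ℂ (w j)) * w (j+1)).re
          + 2 * ((starRingEnd ℂ (w j)) * w (j+1)).im := by
      intro j
      have : Complex.normSq (w j - w (j+1))
          = Complex.normSq (w j) + Complex.normSq (w (j+1))
            - 2*((starRingEnd ℂ (w j)) * w (j+1)).re := by
        simp [Complex.normSq_sub, Complex.mul_re, Complex.normSq_apply]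
        ring
      rw [this]; ring
    rw [Finset.sum_congr rfl fun j _ => hterm j]
    rw [Finset.sum_add_distrib, Finset.sum_sub_distrib, Finset.sum_add_distrib]
    rw [← Finset.mul_sum, ← Finset.mul_sum, ← Finset.mul_sum, ← Finset.mul_sum, hshift]
    rw [hScdef, Complex.re_sum, Complex.im_sum]
    ring
  rw [hT]
  -- spectral positivity
  have hspec : ℓ * (2*s*P - 2*s*Sc.re + 2*Sc.im)
      = ∑ k ∈ range ℓ, (2*s*(1 - (ω ^ (k:ℤ)).re) + 2*(ω ^ (k:ℤ)).im) * N k := by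
    have : ∑ k ∈ range ℓ, (2*s*(1 - (ω ^ (k:ℤ)).re) + 2*(ω ^ (k:ℤ)).im) * N k
        = 2*s*(∑ k ∈ range ℓ, N k) - 2*s*(∑ k ∈ range ℓ, (ω ^ (k:ℤ)).re * N k)
          + 2*(∑ k ∈ range ℓ, (ω ^ (k:ℤ)).im * N k) := by
      rw [Finset.mul_sum, Finset.mul_sum, Finset.mul_sum,
        ← Finset.sum_sub_distrib, ← Finset.sum_add_distrib]
      exact Finset.sum_congr rfl fun k _ => by ring
    rw [this, hP, hRe, hIm]; ring
  have hre : ∀ k : ℕ, (ω ^ (k:ℤ)).re = Real.cos (2*Real.pi*k/ℓ) := by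
    intro k
    have he : ω ^ (k:ℤ) = Complex.exp ((((2*Real.pi*k/ℓ : ℝ)):ℂ) * I) := by
      rw [hω, _root_.zpow_natCast, ← Complex.exp_nat_mul]
      congr 1
      push_cast
      ring
    rw [he, Complex.exp_ofReal_mul_I_re]
  have him : ∀ k : ℕ, (ω ^ (k:ℤ)).im = Real.sin (2*Real.pi*k/ℓ) := by
    intro k
    have he : ω ^ (k:ℤ) = Complex.exp ((((2*Real.pi*k/ℓ : ℝ)):ℂ) * I) := by
      rw [hω, _root_.zpow_natCast, ← Complex.exp_nat_mul]
      congr 1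
      push_cast
      ring
    rw [he, Complex.exp_ofReal_mul_I_im]
  have hpos : 0 ≤ ∑ k ∈ range ℓ, (2*s*(1 - (ω ^ (k:ℤ)).re) + 2*(ω ^ (k:ℤ)).im) * N k := by
    apply Finset.sum_nonneg
    intro k hk
    apply mul_nonneg _ (Complex.normSq_nonneg _)
    rw [hre, him]
    have := lam_nonneg n ℓ k hn hl hln (Finset.mem_range.1 hk) s hs
    linarith
  nlinarith [hspec, hpos]

lemma exists_cycle (n : ℕ) (hn : 1 ≤ n) (B : Matrix (Fin n) (Fin n) ℝ)
    (hB : ∀ i j, 0 ≤ B i j) (hbal : ∀ j, ∑ i, B j i = ∑ i, B i j)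
    (hne : ∃ i j, 0 < B i j) :
    ∃ (ℓ : ℕ) (f : ℕ → Fin n), 1 ≤ ℓ ∧ ℓ ≤ n ∧ f ℓ = f 0 ∧
      ∀ i < ℓ, 0 < B (f i) (f (i+1)) := by
  -- every vertex with positive in-degree has positive out-degree
  have step : ∀ j : Fin n, (∃ i, 0 < B i j) → ∃ k, 0 < B j k := by
    intro j ⟨i, hij⟩
    by_contra hcon
    push_neg at hcon
    have hzero : ∀ k, B j k = 0 := fun k => le_antisymm (hcon k) (hB j k)
    have h1 : ∑ k, B j k = 0 := by simp [hzero]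
    have h2 : 0 < ∑ k, B k j :=
      Finset.sum_pos' (fun k _ => hB k j) ⟨i, Finset.mem_univ i, hij⟩
    rw [hbal j] at h1
    linarith
  -- the set of vertices with positive in-degree
  obtain ⟨i0, j0, h0⟩ := hne
  let S := {j : Fin n // ∃ i, 0 < B i j}
  have gnext : ∀ j : S, ∃ k : S, 0 < B j.1 k.1 := by
    intro j
    obtain ⟨k, hk⟩ := step j.1 j.2
    exact ⟨⟨k, j.1, hk⟩, hk⟩
  choose g hg using gnext
  let f : ℕ → S := fun m => g^[m] ⟨j0, i0, h0⟩
  have hedge : ∀ m : ℕ, 0 < B (f m).1 (f (m+1)).1 := by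
    intro m
    have : f (m+1) = g (f m) := Function.iterate_succ_apply' g m _
    rw [this]
    exact hg (f m)
  -- pigeonhole on f 0, ..., f n
  have hph : ∃ a ∈ Finset.range (n+1), ∃ b ∈ Finset.range (n+1), a ≠ b ∧
      (f a).1 = (f b).1 := by
    have hcard : (Fintype.card (Fin n)) < (Finset.range (n+1)).card := by
      simp
    obtain ⟨a, ha, b, hb, hab, h⟩ :=
      Finset.exists_ne_map_eq_of_card_lt_of_maps_to hcard
        (fun x _ => Finset.mem_univ ((f x).1))
    exact ⟨a, ha, b, hb, hab, h⟩
  obtain ⟨a, ha, b, hb, hab, hfab⟩ := hph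
  -- wlog a < b
  rcases Nat.lt_or_ge a b with h' | h'
  · refine ⟨b - a, fun m => (f (a + m)).1, by omega,
      by simp at ha hb; omega, ?_, ?_⟩
    · show (f (a + (b - a))).1 = (f (a + 0)).1
      rw [show a + (b - a) = b by omega, show a + 0 = a by omega]
      exact hfab.symm
    · intro i hi
      show 0 < B (f (a + i)).1 (f (a + (i+1))).1
      rw [show a + (i+1) = (a+i) + 1 by omega]
      exact hedge (a+i)
  · have h'' : b < a := by omega
    refine ⟨a - b, fun m => (f (b + m)).1, by omega,
      by simp at ha hb; omega, ?_, ?_⟩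
    · show (f (b + (a - b))).1 = (f (b + 0)).1
      rw [show b + (a - b) = a by omega, show b + 0 = b by omega]
      exact hfab
    · intro i hi
      show 0 < B (f (b + i)).1 (f (b + (i+1))).1
      rw [show b + (i+1) = (b+i) + 1 by omega]
      exact hedge (b+i)

lemma main_sum (n : ℕ) (hn : 2 ≤ n) (s : ℝ) (hs : Real.cot (Real.pi / n) ≤ s)
    (z : Fin n → ℂ) :
    ∀ (m : ℕ) (B : Matrix (Fin n) (Fin n) ℝ),
      (Finset.univ.filter fun p : Fin n × Fin n => B p.1 p.2 ≠ 0).card ≤ m →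
      (∀ i j, 0 ≤ B i j) → (∀ j, ∑ i, B j i = ∑ i, B i j) →
      0 ≤ ∑ j, ∑ k, B j k * gterm s (z j) (z k) := by
  intro m
  induction m with
  | zero =>
    intro B hcard _ _
    have hall : ∀ j k, B j k = 0 := by
      intro j k
      by_contra h
      have : (j, k) ∈ Finset.univ.filter fun p : Fin n × Fin n => B p.1 p.2 ≠ 0 := by
        simp [h]
      have := Finset.card_pos.2 ⟨_, this⟩
      omega
    simp [hall]
  | succ m ih =>
    intro B hcard hBnn hbal
    by_cases hB0 : ∀ j k, B j k = 0
    · simp [hB0]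
    · push_neg at hB0
      obtain ⟨j1, k1, hjk⟩ := hB0
      obtain ⟨ℓ, f, hl1, hln, hf0, hedge⟩ := exists_cycle n (by omega) B hBnn hbal
        ⟨j1, k1, lt_of_le_of_ne (hBnn j1 k1) (Ne.symm hjk)⟩
      -- cycle indicator matrix
      set C : Matrix (Fin n) (Fin n) ℝ :=
        fun j k => ∑ i ∈ range ℓ, if f i = j ∧ f (i+1) = k then (1:ℝ) else 0 with hC
      have hCapp : ∀ j k, C j k
          = ∑ i ∈ range ℓ, if f i = j ∧ f (i+1) = k then (1:ℝ) else 0 :=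
        fun j k => rfl
      have hCnn : ∀ j k, 0 ≤ C j k := by
        intro j k
        rw [hCapp]
        apply Finset.sum_nonneg
        intro i _
        split <;> norm_num
      have hCpos_edge : ∀ i ∈ range ℓ, (1:ℝ) ≤ C (f i) (f (i+1)) := by
        intro i hi
        rw [hCapp]
        calc (1:ℝ) = (if f i = f i ∧ f (i+1) = f (i+1) then (1:ℝ) else 0) := by
              rw [if_pos ⟨rfl, rfl⟩]
          _ ≤ _ := Finset.single_le_sum (f := fun i' => if f i' = f i ∧ f (i'+1) = f (i+1) then (1:ℝ) else 0)
              (fun i' _ => by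
                show (0:ℝ) ≤ if f i' = f i ∧ f (i'+1) = f (i+1) then (1:ℝ) else 0
                split <;> norm_num) hi
      -- C has support only on walk edges, and edges have positive B
      have hCsupp : ∀ j k, C j k ≠ 0 → ∃ i ∈ range ℓ, f i = j ∧ f (i+1) = k := by
        intro j k hCjk
        by_contra hcon
        push_neg at hcon
        apply hCjk
        rw [hCapp]
        apply Finset.sum_eq_zero
        intro i hi
        exact if_neg (by rw [not_and]; exact hcon i hi)
      -- balance of C
      have hCbal : ∀ j, ∑ k, C j k = ∑ k, C k j := by
        intro j
        have hout : ∑ k, C j k = ∑ i ∈ range ℓ, if f i = j then (1:ℝ) else 0 := by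
          rw [Finset.sum_congr rfl fun k _ => hCapp j k, Finset.sum_comm]
          refine Finset.sum_congr rfl fun i _ => ?_
          rcases eq_or_ne (f i) j with h | h
          · simp [h]
          · simp [h]
        have hin : ∑ k, C k j = ∑ i ∈ range ℓ, if f (i+1) = j then (1:ℝ) else 0 := by
          rw [Finset.sum_congr rfl fun k _ => hCapp k j, Finset.sum_comm]
          refine Finset.sum_congr rfl fun i _ => ?_
          rcases eq_or_ne (f (i+1)) j with h | h
          · simp [h]
          · simp [h]
        rw [hout, hin]
        have h2 := Finset.sum_range_succ (fun i => if f i = j then (1:ℝ) else 0) ℓ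
        have h3 := Finset.sum_range_succ' (fun i => if f i = j then (1:ℝ) else 0) ℓ
        rw [h3] at h2
        have h4 : (if f ℓ = j then (1:ℝ) else 0) = (if f 0 = j then (1:ℝ) else 0) := by
          rw [hf0]
        simp only [h4] at h2
        linarith
      -- the cycle sum
      have hCsum : ∑ j, ∑ k, C j k * gterm s (z j) (z k)
          = ∑ i ∈ range ℓ, gterm s (z (f i)) (z (f (i+1))) := by
        have h1 : ∀ j k, C j k * gterm s (z j) (z k)
            = ∑ i ∈ range ℓ, if f i = j ∧ f (i+1) = k then gterm s (z j) (z k) else 0 := by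
          intro j k
          rw [hCapp, Finset.sum_mul]
          refine Finset.sum_congr rfl fun i _ => ?_
          split <;> simp
        calc ∑ j, ∑ k, C j k * gterm s (z j) (z k)
            = ∑ j, ∑ k, ∑ i ∈ range ℓ,
                if f i = j ∧ f (i+1) = k then gterm s (z j) (z k) else 0 :=
              Finset.sum_congr rfl fun j _ => Finset.sum_congr rfl fun k _ => h1 j k
          _ = ∑ j, ∑ i ∈ range ℓ, ∑ k,
                if f i = j ∧ f (i+1) = k then gterm s (z j) (z k) else 0 :=
              Finset.sum_congr rfl fun j _ => Finset.sum_comm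
          _ = ∑ i ∈ range ℓ, ∑ j, ∑ k,
                if f i = j ∧ f (i+1) = k then gterm s (z j) (z k) else 0 :=
              Finset.sum_comm
          _ = ∑ i ∈ range ℓ, gterm s (z (f i)) (z (f (i+1))) := by
              refine Finset.sum_congr rfl fun i _ => ?_
              simp [ite_and, Finset.sum_ite_eq, Finset.sum_ite_eq']
      -- choose the minimizing edge
      have hne0 : (range ℓ).Nonempty := ⟨0, Finset.mem_range.2 (by omega)⟩
      obtain ⟨i0, hi0, hmin⟩ := Finset.exists_min_image (range ℓ)
        (fun i => B (f i) (f (i+1)) / C (f i) (f (i+1))) hne0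
      set ε : ℝ := B (f i0) (f (i0+1)) / C (f i0) (f (i0+1)) with hε
      have hCi0 : (0:ℝ) < C (f i0) (f (i0+1)) := lt_of_lt_of_le one_pos (hCpos_edge i0 hi0)
      have hεpos : 0 < ε := div_pos (hedge i0 (Finset.mem_range.1 hi0)) hCi0
      -- the reduced matrix
      set B' : Matrix (Fin n) (Fin n) ℝ := fun j k => B j k - ε * C j k with hB'
      have hB'app : ∀ j k, B' j k = B j k - ε * C j k := fun _ _ => rfl
      have hεC : ∀ j k, ε * C j k ≤ B j k := by
        intro j k
        rcases eq_or_ne (C j k) 0 with h | h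
        · rw [h, mul_zero]; exact hBnn j k
        · obtain ⟨i, hi, hfi, hfi1⟩ := hCsupp j k h
          have hCpos : (0:ℝ) < C j k := lt_of_le_of_ne (hCnn j k) (Ne.symm h)
          have := hmin i hi
          rw [hfi, hfi1] at this
          calc ε * C j k ≤ (B j k / C j k) * C j k := by
                apply mul_le_mul_of_nonneg_right _ (hCnn j k)
                exact le_trans this (le_of_eq rfl)
            _ = B j k := by field_simp
      have hB'nn : ∀ j k, 0 ≤ B' j k := by
        intro j k
        rw [hB'app]
        linarith [hεC j k]
      have hB'bal : ∀ j, ∑ k, B' j k = ∑ k, B' k j := by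
        intro j
        simp only [hB'app]
        rw [Finset.sum_sub_distrib, Finset.sum_sub_distrib, ← Finset.mul_sum, ← Finset.mul_sum,
          hbal j, hCbal j]
      -- support strictly decreases
      have hsub : ∀ j k, B' j k ≠ 0 → B j k ≠ 0 := by
        intro j k hB'jk hBjk
        apply hB'jk
        rw [hB'app, hBjk]
        rcases eq_or_ne (C j k) 0 with h | h
        · rw [h]; ring
        · obtain ⟨i, hi, hfi, hfi1⟩ := hCsupp j k h
          have := hedge i (Finset.mem_range.1 hi)
          rw [hfi, hfi1, hBjk] at this
          linarith
      have hB'zero : B' (f i0) (f (i0+1)) = 0 := by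
        rw [hB'app, hε]
        field_simp
        ring
      have hBi0 : B (f i0) (f (i0+1)) ≠ 0 := ne_of_gt (hedge i0 (Finset.mem_range.1 hi0))
      have hss : (Finset.univ.filter fun p : Fin n × Fin n => B' p.1 p.2 ≠ 0)
          ⊂ (Finset.univ.filter fun p : Fin n × Fin n => B p.1 p.2 ≠ 0) := by
        constructor
        · intro p hp
          simp only [Finset.mem_filter, Finset.mem_univ, true_and] at hp ⊢
          exact hsub p.1 p.2 hp
        · intro hcon
          have : (f i0, f (i0+1)) ∈ (Finset.univ.filter fun p : Fin n × Fin n => B p.1 p.2 ≠ 0) := by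
            simp [hBi0]
          have := hcon this
          simp only [Finset.mem_filter, Finset.mem_univ, true_and] at this
          exact this hB'zero
      have hcard' : (Finset.univ.filter fun p : Fin n × Fin n => B' p.1 p.2 ≠ 0).card ≤ m := by
        have := Finset.card_lt_card hss
        omega
      have hih := ih B' hcard' hB'nn hB'bal
      -- cycle sum nonneg
      have hcyc : 0 ≤ ∑ i ∈ range ℓ, gterm s (z (f i)) (z (f (i+1))) := by
        have := cycle_nonneg n ℓ hn hl1 hln s hs (fun m => z (f m)) (by simp [hf0])
        simpa using this
      -- decompose
      have hdecomp : ∑ j, ∑ k, B j k * gterm s (z j) (z k)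
          = (∑ j, ∑ k, B' j k * gterm s (z j) (z k))
            + ε * (∑ j, ∑ k, C j k * gterm s (z j) (z k)) := by
        rw [Finset.mul_sum, ← Finset.sum_add_distrib]
        refine Finset.sum_congr rfl fun j _ => ?_
        rw [Finset.mul_sum, ← Finset.sum_add_distrib]
        refine Finset.sum_congr rfl fun k _ => ?_
        rw [hB'app]
        ring
      rw [hdecomp]
      have h2 : 0 ≤ ε * (∑ j, ∑ k, C j k * gterm s (z j) (z k)) := by
        rw [hCsum]
        exact mul_nonneg hεpos.le hcyc
      linarith


/-- For `n ≥ 2`, a sum-symmetric `A`, `D` the diagonal matrix of its row sums and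
`M = D − A`, the Hermitian matrix `s (M + Mᵀ) + i (M − Mᵀ)` is positive semi-definite
on `ℂⁿ` for every `s ≥ cot(π/n)`; i.e. the asymmetry index of `D − A` is at most
`cot(π/n)`. -/
theorem sum_symmetric_asymmetry_index (n : ℕ) (hn : 2 ≤ n)
    (A : Matrix (Fin n) (Fin n) ℝ)
    (hA : ∀ i j, 0 ≤ A i j)
    (hsum : ∀ j, ∑ i, A j i = ∑ i, A i j)
    (s : ℝ) (hs : Real.cot (Real.pi / n) ≤ s)
    (z : Fin n → ℂ) :
    0 ≤ star z ⬝ᵥ (Kmat (Matrix.diagonal (fun j => ∑ i, A j i) - A) s) *ᵥ z := by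
  classical
  set M : Matrix (Fin n) (Fin n) ℝ := Matrix.diagonal (fun j => ∑ i, A j i) - A with hM
  set X : Fin n → ℂ := fun j => (starRingEnd ℂ (z j)) * z j with hX
  have hpt : ∀ a b : ℂ, (s:ℂ)*((starRingEnd ℂ a)*a) + (s:ℂ)*((starRingEnd ℂ b)*b)
      - (((s:ℂ)+I) * (starRingEnd ℂ a) * b + ((s:ℂ)-I) * (starRingEnd ℂ b) * a)
      = ((gterm s a b : ℝ) : ℂ) := by
    intro a b
    apply Complex.ext <;>
      simp [gterm, Complex.normSq_apply, Complex.mul_re, Complex.mul_im] <;> ring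
  have key : star z ⬝ᵥ (Kmat M s) *ᵥ z
      = ((∑ j, ∑ k, A j k * gterm s (z j) (z k) : ℝ) : ℂ) := by
    have hK : ∀ j k, Kmat M s j k
        = (s:ℂ)*((M j k : ℝ):ℂ) + (s:ℂ)*((M k j : ℝ):ℂ)
          + I*((M j k : ℝ):ℂ) - I*((M k j : ℝ):ℂ) := by
      intro j k
      simp [Kmat, Matrix.add_apply, Matrix.sub_apply, Matrix.map_apply,
        Matrix.transpose_apply]
      ring
    calc star z ⬝ᵥ (Kmat M s) *ᵥ z
        = ∑ j, (starRingEnd ℂ (z j)) * ∑ k, Kmat M s j k * z k := by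
          simp [dotProduct, Matrix.mulVec, Pi.star_apply, RCLike.star_def]
      _ = (∑ j, ∑ k, ((M j k : ℝ):ℂ) * (((s:ℂ)+I) * (starRingEnd ℂ (z j)) * z k))
            + ∑ j, ∑ k, ((M k j : ℝ):ℂ) * (((s:ℂ)-I) * (starRingEnd ℂ (z j)) * z k) := by
          rw [← Finset.sum_add_distrib]
          refine Finset.sum_congr rfl fun j _ => ?_
          rw [Finset.mul_sum, ← Finset.sum_add_distrib]
          refine Finset.sum_congr rfl fun k _ => ?_
          rw [hK j k]
          ring
      _ = ∑ j, ∑ k, ((M j k : ℝ):ℂ)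
            * (((s:ℂ)+I) * (starRingEnd ℂ (z j)) * z k
                + ((s:ℂ)-I) * (starRingEnd ℂ (z k)) * z j) := by
          have hsw : ∑ j, ∑ k, ((M k j:ℝ):ℂ) * (((s:ℂ)-I) * (starRingEnd ℂ (z j)) * z k)
              = ∑ j, ∑ k, ((M j k:ℝ):ℂ) * (((s:ℂ)-I) * (starRingEnd ℂ (z k)) * z j) :=
            Finset.sum_comm
          rw [hsw, ← Finset.sum_add_distrib]
          refine Finset.sum_congr rfl fun j _ => ?_
          rw [← Finset.sum_add_distrib]
          refine Finset.sum_congr rfl fun k _ => ?_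
          ring
      _ = (∑ j, ((∑ i, A j i : ℝ):ℂ) * (2*(s:ℂ) * X j))
            - ∑ j, ∑ k, ((A j k : ℝ):ℂ)
              * (((s:ℂ)+I) * (starRingEnd ℂ (z j)) * z k
                + ((s:ℂ)-I) * (starRingEnd ℂ (z k)) * z j) := by
          rw [← Finset.sum_sub_distrib]
          refine Finset.sum_congr rfl fun j _ => ?_
          have hdiag : ∑ k, ((Matrix.diagonal (fun j => ∑ i, A j i) j k : ℝ):ℂ)
              * (((s:ℂ)+I) * (starRingEnd ℂ (z j)) * z k
                + ((s:ℂ)-I) * (starRingEnd ℂ (z k)) * z j)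
              = ((∑ i, A j i : ℝ):ℂ) * (2*(s:ℂ) * X j) := by
            rw [Finset.sum_eq_single j]
            · rw [Matrix.diagonal_apply_eq, hX]
              ring
            · intro k _ hk
              rw [Matrix.diagonal_apply_ne' _ hk]
              simp
            · intro h
              exact absurd (Finset.mem_univ j) h
          rw [← hdiag, ← Finset.sum_sub_distrib]
          refine Finset.sum_congr rfl fun k _ => ?_
          rw [hM]
          simp only [Matrix.sub_apply]
          push_cast
          ring
      _ = (∑ j, ∑ k, ((A j k : ℝ):ℂ) * ((s:ℂ) * X j))
            + (∑ j, ∑ k, ((A j k : ℝ):ℂ) * ((s:ℂ) * X k))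
            - ∑ j, ∑ k, ((A j k : ℝ):ℂ)
              * (((s:ℂ)+I) * (starRingEnd ℂ (z j)) * z k
                + ((s:ℂ)-I) * (starRingEnd ℂ (z k)) * z j) := by
          have h1 : ∑ j, ((∑ i, A j i : ℝ):ℂ) * (2*(s:ℂ) * X j)
              = (∑ j, ((∑ i, A j i : ℝ):ℂ) * ((s:ℂ) * X j))
                + ∑ j, ((∑ i, A i j : ℝ):ℂ) * ((s:ℂ) * X j) := by
            rw [← Finset.sum_add_distrib]
            refine Finset.sum_congr rfl fun j _ => ?_
            rw [hsum j]
            ring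
          have h2 : ∑ j, ((∑ i, A j i : ℝ):ℂ) * ((s:ℂ) * X j)
              = ∑ j, ∑ k, ((A j k : ℝ):ℂ) * ((s:ℂ) * X j) := by
            refine Finset.sum_congr rfl fun j _ => ?_
            push_cast
            rw [Finset.sum_mul]
          have h3 : ∑ j, ((∑ i, A i j : ℝ):ℂ) * ((s:ℂ) * X j)
              = ∑ j, ∑ k, ((A j k : ℝ):ℂ) * ((s:ℂ) * X k) := by
            rw [Finset.sum_comm (f := fun j k => ((A j k : ℝ):ℂ) * ((s:ℂ) * X k))]
            refine Finset.sum_congr rfl fun j _ => ?_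
            push_cast
            rw [Finset.sum_mul]
          rw [h1, h2, h3]
      _ = ∑ j, ∑ k, ((A j k : ℝ):ℂ) * ((gterm s (z j) (z k) : ℝ) : ℂ) := by
          rw [← Finset.sum_add_distrib, ← Finset.sum_sub_distrib]
          refine Finset.sum_congr rfl fun j _ => ?_
          rw [← Finset.sum_add_distrib, ← Finset.sum_sub_distrib]
          refine Finset.sum_congr rfl fun k _ => ?_
          rw [← hpt (z j) (z k), hX]
          ring
      _ = ((∑ j, ∑ k, A j k * gterm s (z j) (z k) : ℝ) : ℂ) := by
          push_cast
          rfl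
  rw [key, Complex.zero_le_real]
  exact main_sum n hn s hs z
    ((Finset.univ.filter fun p : Fin n × Fin n => A p.1 p.2 ≠ 0).card) A le_rfl hA hsum
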